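/- arXiv:1909.04801 — 2 statements merged into one kernel-verified Lean document; each statement's English description precedes it below -/
import Mathlib

section
/- Let Ψ = (Ψ_L, Ψ_R) ∈ ℝ^{m×2n} have the (2s, δ)-RIP, where Ψ_L, Ψ_R ∈ ℝ^{m×n}. Fix vectors x, y ∈ ℝ^n and a partition of [n] into consecutive blocks I₁,…,I_r of size at most s (sorted by decreasing magnitude of entries of x) and the analogous partition J₁,…,J_r for y. For any sign vector d ∈ {−1,1}^n, the quantity w = Σ_{p=1}^{r} d(I_p)ᵀ D_{x(I_p)} Ψ_L(:,I_p)ᵀ Ψ_R(:,J_p) D_{y(J_p)} d(J_p) satisfies |w| ≤ δ·‖x‖₂·‖y‖₂. -/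
open Matrix Finset

/-- `Ψ` has the `(T, δ)`-restricted isometry property. -/
def HasRIP {m ι : Type*} [Fintype m] [Fintype ι] (Ψ : Matrix m ι ℝ) (T : ℕ) (δ : ℝ) : Prop :=
  ∀ x : ι → ℝ, (Finset.univ.filter fun i => x i ≠ 0).card ≤ T →
    |∑ a, (Ψ.mulVec x a) ^ 2 - ∑ i, (x i) ^ 2| ≤ δ * ∑ i, (x i) ^ 2

lemma support_sum_elim {n : ℕ} (u v : Fin n → ℝ) :
    (Finset.univ.filter fun i : Fin n ⊕ Fin n => Sum.elim u v i ≠ 0).card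
      = (Finset.univ.filter fun i => u i ≠ 0).card
        + (Finset.univ.filter fun j => v j ≠ 0).card := by
  rw [← Finset.card_disjSum]
  congr 1
  ext z
  cases z <;> simp

lemma bilinear_rip {m n s : ℕ} {δ : ℝ} (Ψ_L Ψ_R : Matrix (Fin m) (Fin n) ℝ)
    (hRIP : HasRIP (Matrix.fromCols Ψ_L Ψ_R) (2 * s) δ)
    (u v : Fin n → ℝ)
    (hu : (Finset.univ.filter fun i => u i ≠ 0).card ≤ s)
    (hv : (Finset.univ.filter fun j => v j ≠ 0).card ≤ s) :
    |∑ i, ∑ j, u i * (∑ a, Ψ_L a i * Ψ_R a j) * v j|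
      ≤ δ / 2 * (∑ i, u i ^ 2 + ∑ j, v j ^ 2) := by
  have key : ∀ w : Fin n → ℝ, (Finset.univ.filter fun j => w j ≠ 0).card ≤ s →
      |∑ a, ((Ψ_L.mulVec u) a + (Ψ_R.mulVec w) a) ^ 2 - (∑ i, u i ^ 2 + ∑ j, w j ^ 2)|
        ≤ δ * (∑ i, u i ^ 2 + ∑ j, w j ^ 2) := by
    intro w hw
    have h := hRIP (Sum.elim u w) (by rw [support_sum_elim]; omega)
    rw [Matrix.fromCols_mulVec_sumElim, Fintype.sum_sum_type (fun i => (Sum.elim u w i) ^ 2)] at h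
    simpa using h
  have h1 := key v hv
  have h2 := key (-v) (by simpa using hv)
  have hnegmul : Ψ_R.mulVec (-v) = - Ψ_R.mulVec v := by
    ext a; simp [Matrix.mulVec, dotProduct, Finset.mul_sum, mul_comm]
  rw [hnegmul] at h2
  have hsq : ∀ j, (-v) j ^ 2 = v j ^ 2 := by intro j; simp
  simp only [hsq] at h2
  have swap3 : ∀ (f : Fin n → Fin n → Fin m → ℝ),
      ∑ i, ∑ j, ∑ a, f i j a = ∑ a, ∑ i, ∑ j, f i j a := fun f => by
    rw [show (∑ i, ∑ j, ∑ a, f i j a) = ∑ i, ∑ a, ∑ j, f i j a from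
      Finset.sum_congr rfl fun i _ => Finset.sum_comm, Finset.sum_comm]
  have hinner : ∑ i, ∑ j, u i * (∑ a, Ψ_L a i * Ψ_R a j) * v j
      = ∑ a, (Ψ_L.mulVec u) a * (Ψ_R.mulVec v) a := by
    simp only [Matrix.mulVec, dotProduct, Finset.sum_mul, Finset.mul_sum]
    rw [swap3 (fun i j a => u i * (Ψ_L a i * Ψ_R a j) * v j)]
    refine Finset.sum_congr rfl fun a _ => ?_
    rw [Finset.sum_comm]
    exact Finset.sum_congr rfl fun j _ => Finset.sum_congr rfl fun i _ => by ring
  set A := Ψ_L.mulVec u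
  set B := Ψ_R.mulVec v
  have hexp : (∑ a, (A a + B a) ^ 2) - (∑ a, (A a + (-B) a) ^ 2)
      = 4 * ∑ a, A a * B a := by
    simp only [← Finset.sum_sub_distrib, Finset.mul_sum]
    refine Finset.sum_congr rfl fun a _ => by simp [Pi.neg_apply]; ring
  have habs : |4 * ∑ a, A a * B a| ≤ 2 * (δ * (∑ i, u i ^ 2 + ∑ j, v j ^ 2)) := by
    rw [← hexp]
    calc |(∑ a, (A a + B a) ^ 2) - (∑ a, (A a + (-B) a) ^ 2)|
        = |(∑ a, (A a + B a) ^ 2 - (∑ i, u i ^ 2 + ∑ j, v j ^ 2))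
            - (∑ a, (A a + (-B) a) ^ 2 - (∑ i, u i ^ 2 + ∑ j, v j ^ 2))| := by congr 1; ring
      _ ≤ _ := abs_sub _ _
      _ ≤ _ := by simp only [Pi.neg_apply] at h1 h2 ⊢; linarith [h1, h2]
  rw [hinner]
  rw [abs_mul, abs_of_nonneg (by norm_num : (0:ℝ) ≤ 4)] at habs
  linarith [habs]

lemma bilinear_rip_norm {m n s : ℕ} {δ : ℝ} (hδ : 0 ≤ δ)
    (Ψ_L Ψ_R : Matrix (Fin m) (Fin n) ℝ)
    (hB : ∀ u v : Fin n → ℝ,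
      (Finset.univ.filter fun i => u i ≠ 0).card ≤ s →
      (Finset.univ.filter fun j => v j ≠ 0).card ≤ s →
      |∑ i, ∑ j, u i * (∑ a, Ψ_L a i * Ψ_R a j) * v j|
        ≤ δ / 2 * (∑ i, u i ^ 2 + ∑ j, v j ^ 2))
    (u v : Fin n → ℝ)
    (hu : (Finset.univ.filter fun i => u i ≠ 0).card ≤ s)
    (hv : (Finset.univ.filter fun j => v j ≠ 0).card ≤ s) :
    |∑ i, ∑ j, u i * (∑ a, Ψ_L a i * Ψ_R a j) * v j|
      ≤ δ * Real.sqrt (∑ i, u i ^ 2) * Real.sqrt (∑ j, v j ^ 2) := by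
  set a := Real.sqrt (∑ i, u i ^ 2) with ha
  set b := Real.sqrt (∑ j, v j ^ 2) with hb
  by_cases hau : ∑ i, u i ^ 2 = 0
  · have hu0 : ∀ i, u i = 0 := by
      intro i
      have := (Finset.sum_eq_zero_iff_of_nonneg (fun i _ => sq_nonneg (u i))).mp hau i (mem_univ i)
      exact pow_eq_zero_iff (by norm_num) |>.mp this
    simp only [hu0, zero_mul, Finset.sum_const_zero, abs_zero]
    positivity
  by_cases hbv : ∑ j, v j ^ 2 = 0
  · have hv0 : ∀ j, v j = 0 := by
      intro j
      have := (Finset.sum_eq_zero_iff_of_nonneg (fun j _ => sq_nonneg (v j))).mp hbv j (mem_univ j)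
      exact pow_eq_zero_iff (by norm_num) |>.mp this
    simp only [hv0, mul_zero, Finset.sum_const_zero, abs_zero]
    positivity
  have hsu : 0 < ∑ i, u i ^ 2 :=
    lt_of_le_of_ne (Finset.sum_nonneg fun i _ => sq_nonneg _) (Ne.symm hau)
  have hsv : 0 < ∑ j, v j ^ 2 :=
    lt_of_le_of_ne (Finset.sum_nonneg fun j _ => sq_nonneg _) (Ne.symm hbv)
  have hapos : 0 < a := Real.sqrt_pos.mpr hsu
  have hbpos : 0 < b := Real.sqrt_pos.mpr hsv
  have ha2 : a ^ 2 = ∑ i, u i ^ 2 := Real.sq_sqrt hsu.le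
  have hb2 : b ^ 2 = ∑ j, v j ^ 2 := Real.sq_sqrt hsv.le
  set u' : Fin n → ℝ := fun i => u i / a with hu'
  set v' : Fin n → ℝ := fun j => v j / b with hv'
  have hu'supp : (Finset.univ.filter fun i => u' i ≠ 0).card ≤ s := by
    refine le_trans (le_of_eq (congrArg _ ?_)) hu
    ext i; simp [hu', div_eq_zero_iff, hapos.ne']
  have hv'supp : (Finset.univ.filter fun j => v' j ≠ 0).card ≤ s := by
    refine le_trans (le_of_eq (congrArg _ ?_)) hv
    ext j; simp [hv', div_eq_zero_iff, hbpos.ne']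
  have hu'2 : ∑ i, u' i ^ 2 = 1 := by
    simp only [hu', div_pow, ← Finset.sum_div, ← ha2]
    field_simp
  have hv'2 : ∑ j, v' j ^ 2 = 1 := by
    simp only [hv', div_pow, ← Finset.sum_div, ← hb2]
    field_simp
  have hkey := hB u' v' hu'supp hv'supp
  rw [hu'2, hv'2] at hkey
  have hscale : ∑ i, ∑ j, u' i * (∑ a, Ψ_L a i * Ψ_R a j) * v' j
      = (∑ i, ∑ j, u i * (∑ a, Ψ_L a i * Ψ_R a j) * v j) / (a * b) := by
    rw [Finset.sum_div]
    refine Finset.sum_congr rfl fun i _ => ?_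
    rw [Finset.sum_div]
    refine Finset.sum_congr rfl fun j _ => ?_
    simp only [hu', hv']
    field_simp
    try ring
  rw [hscale, abs_div, abs_of_pos (mul_pos hapos hbpos), div_le_iff₀ (mul_pos hapos hbpos)] at hkey
  calc |∑ i, ∑ j, u i * (∑ a, Ψ_L a i * Ψ_R a j) * v j|
      ≤ δ / 2 * (1 + 1) * (a * b) := hkey
    _ = δ * a * b := by ring

/-- For `Ψ = (Ψ_L, Ψ_R)` with the `(2s, δ)`-RIP, sorted block partitions `I₁,…,I_r` (for `x`) and
`J₁,…,J_r` (for `y`) with blocks of size at most `s`, and any sign vector `d ∈ {-1,1}^n`, the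
block-diagonal quadratic quantity
`w = Σ_p d(I_p)ᵀ D_{x(I_p)} Ψ_L(:,I_p)ᵀ Ψ_R(:,J_p) D_{y(J_p)} d(J_p)`
satisfies `|w| ≤ δ ‖x‖₂ ‖y‖₂`. -/
theorem rip_block_diagonal_bound {m n s r : ℕ} {δ : ℝ} (hδ : 0 < δ) (hδ1 : δ < 1) (hs : 0 < s)
    (Ψ_L Ψ_R : Matrix (Fin m) (Fin n) ℝ)
    (hRIP : HasRIP (Matrix.fromCols Ψ_L Ψ_R) (2 * s) δ)
    (x y : Fin n → ℝ) (I J : Fin r → Finset (Fin n))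
    (hIdisj : ∀ p q, p ≠ q → Disjoint (I p) (I q))
    (hJdisj : ∀ p q, p ≠ q → Disjoint (J p) (J q))
    (hIunion : Finset.univ.biUnion I = Finset.univ)
    (hJunion : Finset.univ.biUnion J = Finset.univ)
    (hIcard : ∀ p, (I p).card ≤ s)
    (hJcard : ∀ p, (J p).card ≤ s)
    (hIsorted : ∀ p q : Fin r, p < q → ∀ i ∈ I p, ∀ j ∈ I q, |x j| ≤ |x i|)
    (hJsorted : ∀ p q : Fin r, p < q → ∀ i ∈ J p, ∀ j ∈ J q, |y j| ≤ |y i|)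
    (d : Fin n → ℝ) (hd : ∀ i, d i = 1 ∨ d i = -1) :
    |∑ p, ∑ i ∈ I p, ∑ j ∈ J p,
        d i * x i * (∑ a, Ψ_L a i * Ψ_R a j) * y j * d j|
      ≤ δ * Real.sqrt (∑ i, x i ^ 2) * Real.sqrt (∑ i, y i ^ 2) := by
  classical
  set B : Fin n → Fin n → ℝ := fun i j => ∑ a, Ψ_L a i * Ψ_R a j with hB
  set u : Fin r → Fin n → ℝ := fun p i => if i ∈ I p then d i * x i else 0 with hu
  set v : Fin r → Fin n → ℝ := fun p j => if j ∈ J p then y j * d j else 0 with hv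
  have husupp : ∀ p, (Finset.univ.filter fun i => u p i ≠ 0).card ≤ s := by
    intro p
    refine le_trans (Finset.card_le_card ?_) (hIcard p)
    intro i hi
    simp only [Finset.mem_filter, hu] at hi
    by_contra hmem
    exact hi.2 (by simp [hmem])
  have hvsupp : ∀ p, (Finset.univ.filter fun j => v p j ≠ 0).card ≤ s := by
    intro p
    refine le_trans (Finset.card_le_card ?_) (hJcard p)
    intro j hj
    simp only [Finset.mem_filter, hv] at hj
    by_contra hmem
    exact hj.2 (by simp [hmem])
  have hd2 : ∀ i, d i ^ 2 = 1 := by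
    intro i; rcases hd i with h | h <;> rw [h] <;> norm_num
  have husq : ∀ p, ∑ i, u p i ^ 2 = ∑ i ∈ I p, x i ^ 2 := by
    intro p
    rw [show (∑ i, u p i ^ 2) = ∑ i, if i ∈ I p then x i ^ 2 else 0 from
      Finset.sum_congr rfl fun i _ => by
        by_cases hi : i ∈ I p <;> simp [hu, hi, mul_pow, hd2 i]]
    simp [Finset.sum_ite_mem]
  have hvsq : ∀ p, ∑ j, v p j ^ 2 = ∑ j ∈ J p, y j ^ 2 := by
    intro p
    rw [show (∑ j, v p j ^ 2) = ∑ j, if j ∈ J p then y j ^ 2 else 0 from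
      Finset.sum_congr rfl fun j _ => by
        by_cases hj : j ∈ J p <;> simp [hv, hj, mul_pow, hd2 j]]
    simp [Finset.sum_ite_mem]
  have hterm : ∀ p, ∑ i ∈ I p, ∑ j ∈ J p, d i * x i * B i j * y j * d j
      = ∑ i, ∑ j, u p i * B i j * v p j := by
    intro p
    rw [show (∑ i, ∑ j, u p i * B i j * v p j)
        = ∑ i, if i ∈ I p then ∑ j, if j ∈ J p then d i * x i * B i j * (y j * d j) else 0 else 0 from
      Finset.sum_congr rfl fun i _ => by
        by_cases hi : i ∈ I p
        · simp only [hu, hi, if_pos]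
          refine Finset.sum_congr rfl fun j _ => ?_
          by_cases hj : j ∈ J p <;> simp [hv, hj]
        · simp [hu, hi]]
    simp only [Finset.sum_ite_mem, Finset.univ_inter]
    exact Finset.sum_congr rfl fun i _ => Finset.sum_congr rfl fun j _ => by ring
  have hblock : ∀ p, |∑ i ∈ I p, ∑ j ∈ J p, d i * x i * B i j * y j * d j|
      ≤ δ * Real.sqrt (∑ i ∈ I p, x i ^ 2) * Real.sqrt (∑ j ∈ J p, y j ^ 2) := by
    intro p
    rw [hterm p, ← husq p, ← hvsq p]
    exact bilinear_rip_norm hδ.le Ψ_L Ψ_R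
      (fun u v hus hvs => bilinear_rip Ψ_L Ψ_R hRIP u v hus hvs)
      (u p) (v p) (husupp p) (hvsupp p)
  have hxsum : ∑ p, ∑ i ∈ I p, x i ^ 2 = ∑ i, x i ^ 2 := by
    rw [← hIunion, Finset.sum_biUnion]
    intro p _ q _ hpq
    exact hIdisj p q hpq
  have hysum : ∑ p, ∑ j ∈ J p, y j ^ 2 = ∑ j, y j ^ 2 := by
    rw [← hJunion, Finset.sum_biUnion]
    intro p _ q _ hpq
    exact hJdisj p q hpq
  have hCS : ∑ p, Real.sqrt (∑ i ∈ I p, x i ^ 2) * Real.sqrt (∑ j ∈ J p, y j ^ 2)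
      ≤ Real.sqrt (∑ i, x i ^ 2) * Real.sqrt (∑ i, y i ^ 2) := by
    have h := Finset.sum_mul_sq_le_sq_mul_sq Finset.univ
      (fun p => Real.sqrt (∑ i ∈ I p, x i ^ 2)) (fun p => Real.sqrt (∑ j ∈ J p, y j ^ 2))
    have hsq : ∀ p : Fin r, Real.sqrt (∑ i ∈ I p, x i ^ 2) ^ 2 = ∑ i ∈ I p, x i ^ 2 :=
      fun p => Real.sq_sqrt (Finset.sum_nonneg fun i _ => sq_nonneg _)
    have hsq' : ∀ p : Fin r, Real.sqrt (∑ j ∈ J p, y j ^ 2) ^ 2 = ∑ j ∈ J p, y j ^ 2 :=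
      fun p => Real.sq_sqrt (Finset.sum_nonneg fun j _ => sq_nonneg _)
    simp only [hsq, hsq', hxsum, hysum] at h
    have hnn : 0 ≤ ∑ p, Real.sqrt (∑ i ∈ I p, x i ^ 2) * Real.sqrt (∑ j ∈ J p, y j ^ 2) :=
      Finset.sum_nonneg fun p _ => mul_nonneg (Real.sqrt_nonneg _) (Real.sqrt_nonneg _)
    calc ∑ p, Real.sqrt (∑ i ∈ I p, x i ^ 2) * Real.sqrt (∑ j ∈ J p, y j ^ 2)
        ≤ Real.sqrt ((∑ i, x i ^ 2) * (∑ i, y i ^ 2)) := by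
          have h2 := Real.sqrt_le_sqrt h
          rwa [Real.sqrt_sq hnn] at h2
      _ = _ := Real.sqrt_mul (Finset.sum_nonneg fun i _ => sq_nonneg _) _
  calc |∑ p, ∑ i ∈ I p, ∑ j ∈ J p, d i * x i * B i j * y j * d j|
      ≤ ∑ p, |∑ i ∈ I p, ∑ j ∈ J p, d i * x i * B i j * y j * d j| :=
        Finset.abs_sum_le_sum_abs _ _
    _ ≤ ∑ p, δ * Real.sqrt (∑ i ∈ I p, x i ^ 2) * Real.sqrt (∑ j ∈ J p, y j ^ 2) :=
        Finset.sum_le_sum fun p _ => hblock p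
    _ = δ * ∑ p, Real.sqrt (∑ i ∈ I p, x i ^ 2) * Real.sqrt (∑ j ∈ J p, y j ^ 2) := by
        rw [Finset.mul_sum]
        exact Finset.sum_congr rfl fun p _ => by ring
    _ ≤ δ * (Real.sqrt (∑ i, x i ^ 2) * Real.sqrt (∑ i, y i ^ 2)) :=
        mul_le_mul_of_nonneg_left hCS hδ.le
    _ = δ * Real.sqrt (∑ i, x i ^ 2) * Real.sqrt (∑ i, y i ^ 2) := by ring
end

section
/- Conditional decoupling via Hanson–Wright: let X ∈ ℝ^{n×n} be a random matrix, y₁, y₂ ∈ ℝ^n positive vectors, and τ, β > 0 with β < 1/n² such that Pr(|x(i,j)| > τ·y₁(i)·y₂(j)) ≤ β for each pair (i,j). Let ξ ∈ ℝ^n be an independent Rademacher vector and t > 0 with τ ≤ t/66. Then Pr(|ξᵀXξ| > t·‖y₁‖₂·‖y₂‖₂) ≤ n²β + 2·exp(−(1/44)·(t/τ)), where the probability is over both X and ξ. -/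
open Finset
noncomputable section
namespace CHW
def pmr (b : Bool) : ℝ := if b then 1 else -1
lemma pmr_sq (b : Bool) : pmr b * pmr b = 1 := by cases b <;> simp [pmr]

/-- quadratic form over the cube -/
def QF {n : ℕ} (B : Fin n → Fin n → ℝ) (s : Finset (Fin n)) (ε : Fin n → Bool) : ℝ :=
  ∑ i ∈ s, ∑ j ∈ s.erase i, B i j * pmr (ε i) * pmr (ε j)

lemma QF_update_eq {n : ℕ} (B : Fin n → Fin n → ℝ) (s : Finset (Fin n)) (k : Fin n)
    (hk : k ∉ s) (ε : Fin n → Bool) (c : Bool) :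
    QF B s (Function.update ε k c) = QF B s ε := by
  unfold QF
  refine Finset.sum_congr rfl (fun i hi => Finset.sum_congr rfl (fun j hj => ?_))
  rw [Function.update_of_ne (by rintro rfl; exact hk hi),
    Function.update_of_ne (by rintro rfl; exact hk (Finset.mem_of_mem_erase hj))]

lemma QF_insert {n : ℕ} (B : Fin n → Fin n → ℝ) (hsym : ∀ i j, B i j = B j i)
    (s : Finset (Fin n)) (k : Fin n) (hk : k ∉ s) (ε : Fin n → Bool) :
    QF B (insert k s) ε = QF B s ε
      + 2 * pmr (ε k) * ∑ j ∈ s, B k j * pmr (ε j) := by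
  unfold QF
  rw [Finset.sum_insert hk, Finset.erase_insert hk]
  have h1 : ∑ j ∈ s, B k j * pmr (ε k) * pmr (ε j)
      = pmr (ε k) * ∑ j ∈ s, B k j * pmr (ε j) := by
    rw [Finset.mul_sum]; exact Finset.sum_congr rfl fun j _ => by ring
  have h2 : ∀ i ∈ s, ∑ j ∈ (insert k s).erase i, B i j * pmr (ε i) * pmr (ε j)
      = B k i * pmr (ε i) * pmr (ε k) + ∑ j ∈ s.erase i, B i j * pmr (ε i) * pmr (ε j) := by
    intro i hi
    have hik : i ≠ k := by rintro rfl; exact hk hi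
    rw [Finset.erase_insert_of_ne (Ne.symm hik), Finset.sum_insert (fun h => hk (Finset.mem_of_mem_erase h)),
      hsym i k]
  rw [Finset.sum_congr rfl h2, Finset.sum_add_distrib, h1]
  have h3 : ∑ i ∈ s, B k i * pmr (ε i) * pmr (ε k)
      = pmr (ε k) * ∑ j ∈ s, B k j * pmr (ε j) := by
    rw [Finset.mul_sum]; exact Finset.sum_congr rfl fun j _ => by ring
  rw [h3]; ring


lemma sum_update_pair {n : ℕ} (f : (Fin n → Bool) → ℝ) (k : Fin n) :
    ∑ ε : Fin n → Bool, (f (Function.update ε k true) + f (Function.update ε k false))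
      = 2 * ∑ ε : Fin n → Bool, f ε := by
  have h2 : ∑ ε : Fin n → Bool, f (Function.update ε k (!ε k))
      = ∑ ε : Fin n → Bool, f ε := by
    have hbij : Function.Bijective (fun ε : Fin n → Bool => Function.update ε k (!ε k)) := by
      apply Function.Involutive.bijective
      intro ε
      simp [Function.update_idem, Function.update_self, Function.update_eq_self]
    exact hbij.sum_comp f
  have h3 : ∀ ε : Fin n → Bool,
      f (Function.update ε k true) + f (Function.update ε k false)
        = f (Function.update ε k (ε k)) + f (Function.update ε k (!ε k)) := by
    intro ε; cases h : ε k <;> simp [h, add_comm]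
  calc ∑ ε : Fin n → Bool, (f (Function.update ε k true) + f (Function.update ε k false))
      = ∑ ε : Fin n → Bool, (f (Function.update ε k (ε k)) + f (Function.update ε k (!ε k))) :=
        Finset.sum_congr rfl (fun ε _ => h3 ε)
    _ = ∑ ε : Fin n → Bool, f (Function.update ε k (ε k))
        + ∑ ε : Fin n → Bool, f (Function.update ε k (!ε k)) := Finset.sum_add_distrib
    _ = 2 * ∑ ε : Fin n → Bool, f ε := by
        simp only [Function.update_eq_self, h2]; ring


lemma QF_combine {n : ℕ} (X Y : Fin n → Fin n → ℝ) (s : Finset (Fin n)) (ε : Fin n → Bool) :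
    QF X s ε + 2 * QF Y s ε = QF (fun i j => X i j + 2 * Y i j) s ε := by
  unfold QF
  rw [Finset.mul_sum, ← Finset.sum_add_distrib]
  refine Finset.sum_congr rfl (fun i _ => ?_)
  rw [Finset.mul_sum, ← Finset.sum_add_distrib]
  exact Finset.sum_congr rfl (fun j _ => by ring)

lemma L_sq_expand {n : ℕ} (c : Fin n → ℝ) (s : Finset (Fin n)) (ε : Fin n → Bool) :
    (∑ j ∈ s, c j * pmr (ε j))^2
      = ∑ j ∈ s, (c j)^2 + QF (fun i j => c i * c j) s ε := by
  rw [sq, Finset.sum_mul_sum]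
  unfold QF
  rw [← Finset.sum_add_distrib]
  refine Finset.sum_congr rfl (fun i hi => ?_)
  rw [← Finset.add_sum_erase _ (fun j => c i * pmr (ε i) * (c j * pmr (ε j))) hi]
  have h1 : c i * pmr (ε i) * (c i * pmr (ε i)) = c i ^ 2 := by
    have := pmr_sq (ε i); nlinarith
  rw [h1]
  congr 1
  exact Finset.sum_congr rfl (fun j _ => by ring)


lemma cube_mgf {n : ℕ} (s : Finset (Fin n)) :
    ∀ B : Fin n → Fin n → ℝ, (∀ i j, B i j = B j i) →
    (∑ i ∈ s, ∑ j ∈ s, (B i j)^2) ≤ 1/64 →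
    ∑ ε : Fin n → Bool, Real.exp (QF B s ε)
      ≤ 2^n * Real.exp (2 * ∑ i ∈ s, ∑ j ∈ s, (B i j)^2) := by
  induction s using Finset.induction_on with
  | empty =>
      intro B _ _
      unfold QF
      simp only [Finset.sum_empty, mul_zero, Real.exp_zero, Finset.sum_const, nsmul_eq_mul,
        mul_one, Finset.card_univ, Fintype.card_fun, Fintype.card_bool, Fintype.card_fin]
      push_cast
      exact le_refl _
  | @insert k s hk ih =>
      intro B hsym hF
      set b2 : ℝ := ∑ j ∈ s, (B k j)^2 with hb2def
      set A : ℝ := ∑ i ∈ s, ∑ j ∈ s, (B i j)^2 with hAdef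
      set F2 : ℝ := ∑ i ∈ insert k s, ∑ j ∈ insert k s, (B i j)^2 with hF2def
      have hb20 : 0 ≤ b2 := Finset.sum_nonneg fun _ _ => sq_nonneg _
      have hA0 : 0 ≤ A := Finset.sum_nonneg fun _ _ => Finset.sum_nonneg fun _ _ => sq_nonneg _
      -- expand F2
      have hF2 : F2 = B k k ^ 2 + 2 * b2 + A := by
        rw [hF2def, Finset.sum_insert hk, Finset.sum_insert hk]
        have h1 : ∀ i ∈ s, ∑ j ∈ insert k s, (B i j)^2
            = (B k i)^2 + ∑ j ∈ s, (B i j)^2 := by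
          intro i _
          rw [Finset.sum_insert hk, hsym i k]
        rw [Finset.sum_congr rfl h1, Finset.sum_add_distrib]
        ring
      -- the updated matrix
      set B' : Fin n → Fin n → ℝ := fun i j => B i j + 2 * (B k i * B k j) with hB'def
      have hsym' : ∀ i j, B' i j = B' j i := fun i j => by
        simp only [hB'def]; rw [hsym i j]; ring
      set F2' : ℝ := ∑ i ∈ s, ∑ j ∈ s, (B' i j)^2 with hF2'def
      set C : ℝ := ∑ i ∈ s, ∑ j ∈ s, B i j * (B k i * B k j) with hCdef
      have hF2'eq : F2' = A + 4*C + 4*b2^2 := by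
        have h1 : ∀ i ∈ s, ∑ j ∈ s, (B' i j)^2
            = ∑ j ∈ s, ((B i j)^2 + 4 * (B i j * (B k i * B k j)) + 4 * ((B k i)^2 * (B k j)^2)) := by
          intro i _
          exact Finset.sum_congr rfl fun j _ => by simp only [hB'def]; ring
        rw [hF2'def, Finset.sum_congr rfl h1]
        have h2 : ∑ i ∈ s, ∑ j ∈ s, ((B i j)^2 + 4 * (B i j * (B k i * B k j)) + 4 * ((B k i)^2 * (B k j)^2))
            = A + 4 * C + 4 * ∑ i ∈ s, ∑ j ∈ s, (B k i)^2 * (B k j)^2 := by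
          simp only [hAdef, hCdef, Finset.mul_sum, ← Finset.sum_add_distrib]
        rw [h2]
        have h3 : ∑ i ∈ s, ∑ j ∈ s, (B k i)^2 * (B k j)^2 = b2 * b2 := by
          rw [hb2def, Finset.sum_mul_sum]
        rw [h3]; ring
      -- Cauchy-Schwarz for C
      have hCS : C^2 ≤ A * b2^2 := by
        have h1 : C = ∑ p ∈ s ×ˢ s, B p.1 p.2 * (B k p.1 * B k p.2) := by
          rw [hCdef, Finset.sum_product]
        have h2 : A = ∑ p ∈ s ×ˢ s, (B p.1 p.2)^2 := by
          rw [hAdef, Finset.sum_product]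
        have h3 : b2^2 = ∑ p ∈ s ×ˢ s, (B k p.1 * B k p.2)^2 := by
          rw [hb2def, sq, Finset.sum_mul_sum]
          rw [Finset.sum_product]
          exact Finset.sum_congr rfl fun i _ => Finset.sum_congr rfl fun j _ => by ring
        rw [h1, h2, h3]
        exact Finset.sum_mul_sq_le_sq_mul_sq _ _ _
      -- numeric conclusions
      have hAF : A + 2 * b2 ≤ F2 := by rw [hF2]; nlinarith [sq_nonneg (B k k)]
      have hCle : C ≤ Real.sqrt A * b2 := by
        calc C ≤ |C| := le_abs_self C
        _ = Real.sqrt (C^2) := (Real.sqrt_sq_eq_abs C).symm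
        _ ≤ Real.sqrt (A * b2^2) := Real.sqrt_le_sqrt hCS
        _ = Real.sqrt A * b2 := by rw [Real.sqrt_mul hA0, Real.sqrt_sq hb20]
      have hsA : Real.sqrt A ≤ 1/8 := by
        have h4 : Real.sqrt A ≤ Real.sqrt (1/64) := Real.sqrt_le_sqrt (by linarith)
        rwa [show Real.sqrt (1/64 : ℝ) = 1/8 by
          rw [show (1/64 : ℝ) = (1/8)^2 by norm_num, Real.sqrt_sq (by norm_num)]] at h4
      have hsA0 : 0 ≤ Real.sqrt A := Real.sqrt_nonneg A
      have hkey1 : b2 + F2' ≤ F2 := by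
        rw [hF2'eq]
        nlinarith [mul_le_mul_of_nonneg_right hsA hb20]
      have hkey2 : F2' ≤ 1/64 := by
        rw [hF2'eq]
        nlinarith [mul_le_mul_of_nonneg_right hsA hb20]
      -- IH applied to B'
      have hIH := ih B' hsym' hkey2
      -- main estimate
      have hstep : ∀ ε : Fin n → Bool,
          Real.exp (QF B (insert k s) (Function.update ε k true))
            + Real.exp (QF B (insert k s) (Function.update ε k false))
          ≤ 2 * (Real.exp (2 * b2) * Real.exp (QF B' s ε)) := by
        intro ε
        set L : ℝ := ∑ j ∈ s, B k j * pmr (ε j) with hLdef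
        have hL : ∀ c : Bool, QF B (insert k s) (Function.update ε k c)
            = QF B s ε + 2 * pmr c * L := by
          intro c
          rw [QF_insert B hsym s k hk, QF_update_eq B s k hk, Function.update_self]
          congr 2
          rw [hLdef]
          refine Finset.sum_congr rfl fun j hj => ?_
          rw [Function.update_of_ne (by rintro rfl; exact hk hj)]
        rw [hL true, hL false]
        have hpt : pmr true = 1 := rfl
        have hpf : pmr false = -1 := rfl
        rw [hpt, hpf]
        have hcosh : Real.exp (QF B s ε + 2 * 1 * L) + Real.exp (QF B s ε + 2 * (-1) * L)
            = 2 * Real.exp (QF B s ε) * Real.cosh (2 * L) := by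
          rw [Real.cosh_eq]
          rw [show QF B s ε + 2 * 1 * L = QF B s ε + 2*L by ring,
            show QF B s ε + 2 * (-1) * L = QF B s ε + -(2*L) by ring,
            Real.exp_add, Real.exp_add]
          ring
        rw [hcosh]
        have hch : Real.cosh (2*L) ≤ Real.exp ((2*L)^2/2) := Real.cosh_le_exp_half_sq _
        have hexp : Real.exp (QF B s ε) * Real.exp ((2*L)^2/2)
            = Real.exp (2*b2) * Real.exp (QF B' s ε) := by
          rw [← Real.exp_add, ← Real.exp_add]
          congr 1
          have hLsq : (2*L)^2/2 = 2 * L^2 := by ring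
          rw [hLsq, hLdef, L_sq_expand (fun j => B k j) s ε]
          have := QF_combine B (fun i j => B k i * B k j) s ε
          rw [hb2def]
          have hBB' : QF (fun i j => B i j + 2 * (B k i * B k j)) s ε = QF B' s ε := rfl
          rw [← hBB', ← this]
          ring
        calc 2 * Real.exp (QF B s ε) * Real.cosh (2*L)
            ≤ 2 * Real.exp (QF B s ε) * Real.exp ((2*L)^2/2) := by
              have h0 : (0:ℝ) ≤ 2 * Real.exp (QF B s ε) := by positivity
              exact mul_le_mul_of_nonneg_left hch h0
        _ = 2 * (Real.exp (2*b2) * Real.exp (QF B' s ε)) := by rw [mul_assoc, hexp]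
      -- assemble
      have hdouble : 2 * ∑ ε : Fin n → Bool, Real.exp (QF B (insert k s) ε)
          ≤ 2 * (Real.exp (2 * b2) * ∑ ε : Fin n → Bool, Real.exp (QF B' s ε)) := by
        rw [← sum_update_pair (fun ε => Real.exp (QF B (insert k s) ε)) k]
        calc ∑ ε : Fin n → Bool, (Real.exp (QF B (insert k s) (Function.update ε k true))
              + Real.exp (QF B (insert k s) (Function.update ε k false)))
            ≤ ∑ ε : Fin n → Bool, 2 * (Real.exp (2 * b2) * Real.exp (QF B' s ε)) :=
              Finset.sum_le_sum fun ε _ => hstep ε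
        _ = 2 * (Real.exp (2 * b2) * ∑ ε : Fin n → Bool, Real.exp (QF B' s ε)) := by
              simp [Finset.mul_sum]
      have hmain : ∑ ε : Fin n → Bool, Real.exp (QF B (insert k s) ε)
          ≤ Real.exp (2 * b2) * ∑ ε : Fin n → Bool, Real.exp (QF B' s ε) := by linarith
      calc ∑ ε : Fin n → Bool, Real.exp (QF B (insert k s) ε)
          ≤ Real.exp (2 * b2) * ∑ ε : Fin n → Bool, Real.exp (QF B' s ε) := hmain
      _ ≤ Real.exp (2 * b2) * (2^n * Real.exp (2 * F2')) := by
            exact mul_le_mul_of_nonneg_left hIH (Real.exp_nonneg _)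
      _ = 2^n * Real.exp (2 * b2 + 2 * F2') := by rw [mul_left_comm, ← Real.exp_add]
      _ ≤ 2^n * Real.exp (2 * F2) := by
            have : (2:ℝ) * b2 + 2 * F2' ≤ 2 * F2 := by linarith
            have h2n : (0:ℝ) ≤ 2^n := by positivity
            exact mul_le_mul_of_nonneg_left (Real.exp_le_exp.mpr this) h2n

/-- off-diagonal quadratic form -/
def QD {n : ℕ} (a : Fin n → Fin n → ℝ) (ε : Fin n → Bool) : ℝ :=
  ∑ i, ∑ j ∈ Finset.univ.erase i, a i j * pmr (ε i) * pmr (ε j)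

lemma QF_neg {n : ℕ} (B : Fin n → Fin n → ℝ) (s : Finset (Fin n)) (ε : Fin n → Bool) :
    QF (fun i j => -B i j) s ε = -QF B s ε := by
  unfold QF
  rw [← Finset.sum_neg_distrib]
  refine Finset.sum_congr rfl fun i _ => ?_
  rw [← Finset.sum_neg_distrib]
  exact Finset.sum_congr rfl fun j _ => by ring

lemma QD_transpose {n : ℕ} (a : Fin n → Fin n → ℝ) (ε : Fin n → Bool) :
    QD (fun i j => a j i) ε = QD a ε := by
  unfold QD
  have h : ∀ (b : Fin n → Fin n → ℝ), ∑ i, ∑ j ∈ Finset.univ.erase i, b i j * pmr (ε i) * pmr (ε j)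
      = (∑ i, ∑ j, b i j * pmr (ε i) * pmr (ε j)) - ∑ i, b i i * pmr (ε i) * pmr (ε i) := by
    intro b
    rw [← Finset.sum_sub_distrib]
    refine Finset.sum_congr rfl fun i _ => ?_
    rw [Finset.sum_erase_eq_sub (Finset.mem_univ i)]
  rw [h, h]
  congr 1
  rw [Finset.sum_comm]
  exact Finset.sum_congr rfl fun i _ => Finset.sum_congr rfl fun j _ => by ring

lemma QF_sym_eq {n : ℕ} (a : Fin n → Fin n → ℝ) (lam : ℝ) (ε : Fin n → Bool) :
    QF (fun i j => lam * ((a i j + a j i)/2)) Finset.univ ε = lam * QD a ε := by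
  have h1 : QF (fun i j => lam * ((a i j + a j i)/2)) Finset.univ ε
      = (lam/2) * QD a ε + (lam/2) * QD (fun i j => a j i) ε := by
    unfold QF QD
    rw [Finset.mul_sum, Finset.mul_sum, ← Finset.sum_add_distrib]
    refine Finset.sum_congr rfl fun i _ => ?_
    rw [Finset.mul_sum, Finset.mul_sum, ← Finset.sum_add_distrib]
    exact Finset.sum_congr rfl fun j _ => by ring
  rw [h1, QD_transpose]; ring

lemma cube_chernoff_one {n : ℕ} (B : Fin n → Fin n → ℝ) (hsym : ∀ i j, B i j = B j i)
    (hF : ∑ i, ∑ j, (B i j)^2 ≤ 1/64) (v : ℝ) :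
    ((Finset.univ.filter (fun ε : Fin n → Bool => v < QF B Finset.univ ε)).card : ℝ)
      ≤ 2^n * Real.exp (1/32) * Real.exp (-v) := by
  have hmgf := cube_mgf Finset.univ B hsym hF
  set F := Finset.univ.filter (fun ε : Fin n → Bool => v < QF B Finset.univ ε) with hFdef
  have h1 : (F.card : ℝ) * Real.exp v ≤ ∑ ε ∈ F, Real.exp (QF B Finset.univ ε) := by
    have he : (F.card : ℝ) * Real.exp v = ∑ _ε ∈ F, Real.exp v := by
      rw [Finset.sum_const, nsmul_eq_mul]
    rw [he]
    exact Finset.sum_le_sum fun ε hε =>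
      le_of_lt (Real.exp_lt_exp.mpr (Finset.mem_filter.mp hε).2)
  have h2 : ∑ ε ∈ F, Real.exp (QF B Finset.univ ε)
      ≤ ∑ ε : Fin n → Bool, Real.exp (QF B Finset.univ ε) :=
    Finset.sum_le_sum_of_subset_of_nonneg (Finset.filter_subset _ _)
      (fun ε _ _ => Real.exp_nonneg _)
  have h3 : (2:ℝ)^n * Real.exp (2 * ∑ i, ∑ j, (B i j)^2) ≤ 2^n * Real.exp (1/32) := by
    have : (2:ℝ) * ∑ i, ∑ j, (B i j)^2 ≤ 1/32 := by linarith
    exact mul_le_mul_of_nonneg_left (Real.exp_le_exp.mpr this) (by positivity)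
  have hcombined : (F.card : ℝ) * Real.exp v ≤ 2^n * Real.exp (1/32) := by
    calc (F.card : ℝ) * Real.exp v ≤ _ := h1
    _ ≤ _ := h2
    _ ≤ _ := hmgf
    _ ≤ _ := h3
  have hev : (0:ℝ) < Real.exp v := Real.exp_pos v
  calc (F.card : ℝ) = (F.card : ℝ) * Real.exp v * Real.exp (-v) := by
        rw [mul_assoc, ← Real.exp_add]; simp
  _ ≤ 2^n * Real.exp (1/32) * Real.exp (-v) :=
        mul_le_mul_of_nonneg_right hcombined (Real.exp_nonneg _)

lemma cube_tail {n : ℕ} (a : Fin n → Fin n → ℝ) (lam v : ℝ) (hlam : 0 < lam)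
    (hF : ∑ i, ∑ j, (lam * ((a i j + a j i)/2))^2 ≤ 1/64) :
    ((Finset.univ.filter (fun ε : Fin n → Bool => v < |QD a ε|)).card : ℝ)
      ≤ 2^n * (2 * Real.exp (1/32) * Real.exp (-(lam * v))) := by
  set B : Fin n → Fin n → ℝ := fun i j => lam * ((a i j + a j i)/2) with hBdef
  have hsymB : ∀ i j, B i j = B j i := fun i j => by simp only [hBdef]; ring
  have hsymB' : ∀ i j, -B i j = -B j i := fun i j => by rw [hsymB i j]
  have hFneg : ∑ i, ∑ j, (-B i j)^2 ≤ 1/64 := by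
    simpa only [neg_sq] using hF
  have hQ : ∀ ε, QF B Finset.univ ε = lam * QD a ε := QF_sym_eq a lam
  have hsubset : Finset.univ.filter (fun ε : Fin n → Bool => v < |QD a ε|)
      ⊆ (Finset.univ.filter (fun ε : Fin n → Bool => lam * v < QF B Finset.univ ε))
        ∪ (Finset.univ.filter (fun ε : Fin n → Bool => lam * v < QF (fun i j => -B i j) Finset.univ ε)) := by
    intro ε hε
    have h := (Finset.mem_filter.mp hε).2
    rcases lt_abs.mp h with h' | h'
    · exact Finset.mem_union_left _ (Finset.mem_filter.mpr ⟨Finset.mem_univ _, by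
        rw [hQ]; exact (mul_lt_mul_iff_right₀ hlam).mpr h'⟩)
    · exact Finset.mem_union_right _ (Finset.mem_filter.mpr ⟨Finset.mem_univ _, by
        rw [QF_neg, hQ]
        have : lam * v < lam * (-QD a ε) := (mul_lt_mul_iff_right₀ hlam).mpr h'
        linarith⟩)
  have hcard := Finset.card_le_card hsubset
  have hcard2 := Finset.card_union_le
    (Finset.univ.filter (fun ε : Fin n → Bool => lam * v < QF B Finset.univ ε))
    (Finset.univ.filter (fun ε : Fin n → Bool => lam * v < QF (fun i j => -B i j) Finset.univ ε))
  have hc1 := cube_chernoff_one B hsymB hF (lam * v)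
  have hc2 := cube_chernoff_one (fun i j => -B i j) hsymB' hFneg (lam * v)
  have : ((Finset.univ.filter (fun ε : Fin n → Bool => v < |QD a ε|)).card : ℝ)
      ≤ ((Finset.univ.filter (fun ε : Fin n → Bool => lam * v < QF B Finset.univ ε)).card : ℝ)
        + ((Finset.univ.filter (fun ε : Fin n → Bool => lam * v < QF (fun i j => -B i j) Finset.univ ε)).card : ℝ) := by
    have := le_trans hcard hcard2
    exact_mod_cast this
  linarith

open MeasureTheory
open scoped ENNReal

/-- uniform measure on Bool -/
def Bu : Measure Bool := (1/2 : ℝ≥0∞) • Measure.dirac true + (1/2 : ℝ≥0∞) • Measure.dirac false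

instance : IsProbabilityMeasure Bu := by
  constructor
  simp [Bu]
  rw [ENNReal.inv_two_add_inv_two]

lemma Bu_singleton (b : Bool) : Bu {b} = 1/2 := by
  cases b <;>
    simp [Bu, Measure.dirac_apply' _ (MeasurableSet.singleton _)]

lemma cube_count {n : ℕ} (p : (Fin n → Bool) → Prop) [DecidablePred p] :
    (Measure.pi fun _ : Fin n => Bu) {ε | p ε}
      = (Finset.univ.filter p).card * (1/2 : ℝ≥0∞)^n := by
  classical
  have hset : {ε | p ε} = ⋃ ε ∈ Finset.univ.filter p, ({ε} : Set (Fin n → Bool)) := by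
    ext ε
    simp
  rw [hset, measure_biUnion_finset]
  · have hsingle : ∀ ε : Fin n → Bool, (Measure.pi fun _ : Fin n => Bu) {ε} = (1/2 : ℝ≥0∞)^n := by
      intro ε
      rw [← Set.univ_pi_singleton ε, Measure.pi_pi]
      simp [Bu_singleton]
    rw [Finset.sum_congr rfl fun ε _ => hsingle ε, Finset.sum_const, nsmul_eq_mul]
  · intro a _ b _ hab
    simp [Function.onFun, Set.disjoint_singleton, hab]
  · exact fun _ _ => MeasurableSet.singleton _

end CHW

open MeasureTheory ProbabilityTheory
open scoped ENNReal

set_option maxHeartbeats 2000000 in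
/-- Conditional decoupling via Hanson–Wright: if each entry of a random matrix `X` satisfies
`Pr(|X(i,j)| > τ y₁(i) y₂(j)) ≤ β` and `ξ` is an independent Rademacher vector, then for
`t > 0` with `τ ≤ t/66`,
`Pr(|ξᵀ X ξ| > t ‖y₁‖₂ ‖y₂‖₂) ≤ n² β + 2 exp(−(1/44)(t/τ))`. -/
theorem conditional_hanson_wright {Ω : Type*} [MeasurableSpace Ω] (μ : Measure Ω)
    [IsProbabilityMeasure μ] {n : ℕ}
    (X : Ω → Fin n → Fin n → ℝ) (ξ : Ω → Fin n → ℝ)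
    (hXmeas : Measurable X) (hξmeas : Measurable ξ)
    (y₁ y₂ : Fin n → ℝ) (hy₁ : ∀ i, 0 < y₁ i) (hy₂ : ∀ i, 0 < y₂ i)
    {τ β t : ℝ} (hτ : 0 < τ) (hβ : 0 < β) (hβn : β < 1 / (n : ℝ) ^ 2)
    (htail : ∀ i j, μ {ω | τ * y₁ i * y₂ j < |X ω i j|} ≤ ENNReal.ofReal β)
    (hξindep : iIndepFun (fun i ω => ξ ω i) μ)
    (hξlaw : ∀ i, μ.map (fun ω => ξ ω i) =
      (1 / 2 : ℝ≥0∞) • Measure.dirac (1 : ℝ) + (1 / 2 : ℝ≥0∞) • Measure.dirac (-1 : ℝ))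
    (hXξ : IndepFun X ξ μ)
    (ht : 0 < t) (hτt : τ ≤ t / 66) :
    μ {ω | t * Real.sqrt (∑ i, y₁ i ^ 2) * Real.sqrt (∑ i, y₂ i ^ 2)
          < |∑ i, ∑ j, ξ ω i * X ω i j * ξ ω j|}
      ≤ ENNReal.ofReal ((n : ℝ) ^ 2 * β + 2 * Real.exp (-(1 / 44) * (t / τ))) := by
  classical
  rcases Nat.eq_zero_or_pos n with hn | hn
  · subst hn
    have hempty : {ω : Ω | t * Real.sqrt (∑ i, y₁ i ^ 2) * Real.sqrt (∑ i, y₂ i ^ 2)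
        < |∑ i, ∑ j, ξ ω i * X ω i j * ξ ω j|} = ∅ := by
      ext ω
      simp
    rw [hempty, measure_empty]
    exact zero_le'
  -- notation
  set W1 : ℝ := Real.sqrt (∑ i, y₁ i ^ 2) with hW1def
  set W2 : ℝ := Real.sqrt (∑ i, y₂ i ^ 2) with hW2def
  haveI : Nonempty (Fin n) := Fin.pos_iff_nonempty.mp hn
  have hS1 : 0 < ∑ i, y₁ i ^ 2 :=
    Finset.sum_pos (fun i _ => pow_pos (hy₁ i) 2) Finset.univ_nonempty
  have hS2 : 0 < ∑ i, y₂ i ^ 2 :=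
    Finset.sum_pos (fun i _ => pow_pos (hy₂ i) 2) Finset.univ_nonempty
  have hW1 : 0 < W1 := Real.sqrt_pos.mpr hS1
  have hW2 : 0 < W2 := Real.sqrt_pos.mpr hS2
  have hW1sq : W1^2 = ∑ i, y₁ i ^ 2 := Real.sq_sqrt hS1.le
  have hW2sq : W2^2 = ∑ i, y₂ i ^ 2 := Real.sq_sqrt hS2.le
  set lam : ℝ := 1 / (8 * τ * (W1 * W2)) with hlamdef
  have hlam : 0 < lam := by
    rw [hlamdef]; positivity
  set D : ℝ := 2 * Real.exp (-(1 / 44) * (t / τ)) with hDdef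
  have hD0 : 0 ≤ D := by rw [hDdef]; positivity
  have hr : (66 : ℝ) ≤ t / τ := by
    rw [le_div_iff₀ hτ]
    have := (le_div_iff₀ (show (0:ℝ) < 66 by norm_num)).mp hτt
    linarith
  have hτt' : τ < t := by
    nlinarith
  -- the numeric bound
  have hnum : 2 * Real.exp (1/32) * Real.exp (-(lam * ((t - τ) * (W1 * W2)))) ≤ D := by
    have hlv : lam * ((t - τ) * (W1 * W2)) = (t - τ) / (8 * τ) := by
      rw [hlamdef]
      field_simp
      try ring
    rw [hDdef, hlv, mul_assoc, ← Real.exp_add]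
    have hexps : 1/32 + -((t - τ) / (8 * τ)) ≤ -(1 / 44) * (t / τ) := by
      have h1 : (t - τ) / (8 * τ) = (t/τ)/8 - 1/8 := by
        field_simp
        try ring
      rw [h1]
      set r : ℝ := t / τ
      have : (5:ℝ)/32 ≤ r * (9/88) := by nlinarith
      nlinarith
    have := Real.exp_le_exp.mpr hexps
    linarith
  -- Bad event
  set Bad : Set Ω := ⋃ i, ⋃ j, {ω | τ * y₁ i * y₂ j < |X ω i j|} with hBaddef
  have hXij : ∀ i j, Measurable (fun ω => X ω i j) := fun i j =>
    (measurable_pi_apply j).comp ((measurable_pi_apply i).comp hXmeas)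
  have hBadmeas : MeasurableSet Bad := by
    refine MeasurableSet.iUnion fun i => MeasurableSet.iUnion fun j => ?_
    exact measurableSet_lt measurable_const (hXij i j).abs
  have hμBad : μ Bad ≤ ENNReal.ofReal ((n : ℝ)^2 * β) := by
    have h1 : μ Bad ≤ ∑' (i : Fin n), ∑' (j : Fin n), μ {ω | τ * y₁ i * y₂ j < |X ω i j|} := by
      refine le_trans (measure_iUnion_le _) (ENNReal.tsum_le_tsum fun i => measure_iUnion_le _)
    have h2 : ∑' (i : Fin n), ∑' (j : Fin n), μ {ω | τ * y₁ i * y₂ j < |X ω i j|}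
        ≤ ∑' (_ : Fin n), ∑' (_ : Fin n), ENNReal.ofReal β := by
      exact ENNReal.tsum_le_tsum fun i => ENNReal.tsum_le_tsum fun j => htail i j
    have h3 : ∑' (_ : Fin n), ∑' (_ : Fin n), ENNReal.ofReal β
        = (n : ℝ≥0∞) * ((n : ℝ≥0∞) * ENNReal.ofReal β) := by
      rw [tsum_fintype, tsum_fintype]
      simp [Finset.sum_const, Finset.card_univ]
      try ring
    have h4 : (n : ℝ≥0∞) * ((n : ℝ≥0∞) * ENNReal.ofReal β) = ENNReal.ofReal ((n : ℝ)^2 * β) := by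
      rw [ENNReal.ofReal_mul (by positivity : (0:ℝ) ≤ (n:ℝ)^2),
        ENNReal.ofReal_pow (by positivity : (0:ℝ) ≤ (n:ℝ)), ENNReal.ofReal_natCast n]
      try ring
    calc μ Bad ≤ _ := h1
    _ ≤ _ := h2
    _ = _ := by rw [h3, h4]
  -- the event
  set E : Set Ω := {ω | t * W1 * W2 < |∑ i, ∑ j, ξ ω i * X ω i j * ξ ω j|} with hEdef
  -- the product-space set
  set S : Set ((Fin n → Fin n → ℝ) × (Fin n → ℝ)) :=
    {p | (∀ i j, |p.1 i j| ≤ τ * y₁ i * y₂ j)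
      ∧ t * W1 * W2 < |∑ i, ∑ j, p.2 i * p.1 i j * p.2 j|} with hSdef
  have hQmeas : Measurable (fun p : (Fin n → Fin n → ℝ) × (Fin n → ℝ) =>
      ∑ i, ∑ j, p.2 i * p.1 i j * p.2 j) := by
    refine Finset.measurable_sum _ fun i _ => Finset.measurable_sum _ fun j _ => ?_
    have h1 : Measurable (fun p : (Fin n → Fin n → ℝ) × (Fin n → ℝ) => p.2 i) :=
      (measurable_pi_apply i).comp measurable_snd
    have h2 : Measurable (fun p : (Fin n → Fin n → ℝ) × (Fin n → ℝ) => p.1 i j) :=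
      (measurable_pi_apply j).comp ((measurable_pi_apply i).comp measurable_fst)
    have h3 : Measurable (fun p : (Fin n → Fin n → ℝ) × (Fin n → ℝ) => p.2 j) :=
      (measurable_pi_apply j).comp measurable_snd
    exact (h1.mul h2).mul h3
  have hSmeas : MeasurableSet S := by
    have h1 : S = (⋂ i, ⋂ j, {p : (Fin n → Fin n → ℝ) × (Fin n → ℝ) |
        |p.1 i j| ≤ τ * y₁ i * y₂ j})
        ∩ {p | t * W1 * W2 < |∑ i, ∑ j, p.2 i * p.1 i j * p.2 j|} := by
      ext p
      simp only [hSdef, Set.mem_setOf_eq, Set.mem_inter_iff, Set.mem_iInter]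
      try tauto
    rw [h1]
    refine MeasurableSet.inter ?_ ?_
    · refine MeasurableSet.iInter fun i => MeasurableSet.iInter fun j => ?_
      exact measurableSet_le
        (((measurable_pi_apply j).comp ((measurable_pi_apply i).comp measurable_fst)).abs)
        measurable_const
    · exact measurableSet_lt measurable_const hQmeas.abs
  have hpre : E ∩ Badᶜ = (fun ω => (X ω, ξ ω)) ⁻¹' S := by
    ext ω
    simp only [hEdef, hBaddef, hSdef, Set.mem_inter_iff, Set.mem_setOf_eq, Set.mem_compl_iff,
      Set.mem_iUnion, Set.mem_preimage, not_exists, not_lt]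
    tauto
  -- independence: map to product measure
  haveI hPX : IsProbabilityMeasure (μ.map X) := Measure.isProbabilityMeasure_map hXmeas.aemeasurable
  haveI hPξ : IsProbabilityMeasure (μ.map ξ) := Measure.isProbabilityMeasure_map hξmeas.aemeasurable
  have hprod : μ.map (fun ω => (X ω, ξ ω)) = (μ.map X).prod (μ.map ξ) :=
    (indepFun_iff_map_prod_eq_prod_map_map hXmeas.aemeasurable hξmeas.aemeasurable).mp hXξ
  -- identify the law of ξ
  set ρ : Measure ℝ :=
    (1 / 2 : ℝ≥0∞) • Measure.dirac (1 : ℝ) + (1 / 2 : ℝ≥0∞) • Measure.dirac (-1 : ℝ) with hρdef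
  haveI : IsProbabilityMeasure ρ := by
    constructor
    simp [hρdef]
    rw [ENNReal.inv_two_add_inv_two]
  have hν : μ.map ξ = Measure.pi (fun _ : Fin n => ρ) := by
    refine (Measure.pi_eq fun s hs => ?_).symm
    rw [Measure.map_apply hξmeas (MeasurableSet.univ_pi hs)]
    have hpre2 : ξ ⁻¹' Set.pi Set.univ s = ⋂ i ∈ (Finset.univ : Finset (Fin n)),
        (fun ω => ξ ω i) ⁻¹' (s i) := by
      ext ω
      simp [Set.mem_pi]
    rw [hpre2, hξindep.measure_inter_preimage_eq_mul Finset.univ (fun i _ => hs i)]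
    refine Finset.prod_congr rfl fun i _ => ?_
    have hmi : μ ((fun ω => ξ ω i) ⁻¹' s i) = (μ.map (fun ω => ξ ω i)) (s i) :=
      (Measure.map_apply (hξmeas.eval) (hs i)).symm
    rw [hmi, hξlaw i]
  -- the law of ξ as pushforward of the Bool cube
  set T : (Fin n → Bool) → (Fin n → ℝ) := fun ε i => CHW.pmr (ε i) with hTdef
  have hTmeas : Measurable T := measurable_of_countable T
  have hcubelaw : Measure.pi (fun _ : Fin n => ρ)
      = (Measure.pi fun _ : Fin n => CHW.Bu).map T := by
    refine Measure.pi_eq fun s hs => ?_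
    rw [Measure.map_apply hTmeas (MeasurableSet.univ_pi hs)]
    have hpre3 : T ⁻¹' Set.pi Set.univ s = Set.pi Set.univ (fun i => CHW.pmr ⁻¹' (s i)) := by
      ext ε
      simp [hTdef, Set.mem_pi]
    rw [hpre3, Measure.pi_pi]
    refine Finset.prod_congr rfl fun i _ => ?_
    have : CHW.Bu (CHW.pmr ⁻¹' (s i)) = ρ (s i) := by
      rw [hρdef, CHW.Bu]
      rw [Measure.add_apply, Measure.add_apply, Measure.smul_apply, Measure.smul_apply,
        Measure.smul_apply, Measure.smul_apply,
        Measure.dirac_apply' _ (Set.Finite.measurableSet (Set.toFinite _)),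
        Measure.dirac_apply' _ (Set.Finite.measurableSet (Set.toFinite _)),
        Measure.dirac_apply' _ (hs i), Measure.dirac_apply' _ (hs i)]
      have h1 : (CHW.pmr ⁻¹' (s i)).indicator (1 : Bool → ℝ≥0∞) true
          = (s i).indicator (1 : ℝ → ℝ≥0∞) 1 := by
        simp [Set.indicator_apply, Set.mem_preimage, CHW.pmr]
      have h2 : (CHW.pmr ⁻¹' (s i)).indicator (1 : Bool → ℝ≥0∞) false
          = (s i).indicator (1 : ℝ → ℝ≥0∞) (-1) := by
        simp [Set.indicator_apply, Set.mem_preimage, CHW.pmr]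
      rw [h1, h2]
    rw [this]
  -- pointwise section bound
  have hsection : ∀ x : Fin n → Fin n → ℝ,
      (μ.map ξ) (Prod.mk x ⁻¹' S) ≤ ENNReal.ofReal D := by
    intro x
    by_cases hx : ∀ i j, |x i j| ≤ τ * y₁ i * y₂ j
    · have hsec : Prod.mk x ⁻¹' S
          = {e : Fin n → ℝ | t * W1 * W2 < |∑ i, ∑ j, e i * x i j * e j|} := by
        ext e
        simp only [hSdef, Set.mem_preimage, Set.mem_setOf_eq]
        tauto
      have hsecmeas : MeasurableSet {e : Fin n → ℝ | t * W1 * W2 < |∑ i, ∑ j, e i * x i j * e j|} := by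
        refine measurableSet_lt measurable_const (Measurable.abs ?_)
        refine Finset.measurable_sum _ fun i _ => Finset.measurable_sum _ fun j _ => ?_
        exact ((measurable_pi_apply i).mul measurable_const).mul (measurable_pi_apply j)
      rw [hsec, hν, hcubelaw, Measure.map_apply hTmeas hsecmeas]
      have hpreT : T ⁻¹' {e : Fin n → ℝ | t * W1 * W2 < |∑ i, ∑ j, e i * x i j * e j|}
          = {ε : Fin n → Bool | t * W1 * W2
              < |∑ i, ∑ j, CHW.pmr (ε i) * x i j * CHW.pmr (ε j)|} := by
        ext ε
        simp [hTdef]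
      rw [hpreT, CHW.cube_count]
      -- split diagonal and off-diagonal
      have hdiag : |∑ i, x i i| ≤ τ * (W1 * W2) := by
        have h1 : |∑ i, x i i| ≤ ∑ i, |x i i| := Finset.abs_sum_le_sum_abs _ _
        have h2 : ∑ i, |x i i| ≤ ∑ i, τ * (y₁ i * y₂ i) := by
          refine Finset.sum_le_sum fun i _ => ?_
          have := hx i i
          rw [mul_assoc] at this
          exact this
        have h3 : ∑ i, y₁ i * y₂ i ≤ W1 * W2 := by
          have hcs := Finset.sum_mul_sq_le_sq_mul_sq Finset.univ y₁ y₂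
          have hnn : 0 ≤ ∑ i, y₁ i * y₂ i :=
            Finset.sum_nonneg fun i _ => mul_nonneg (hy₁ i).le (hy₂ i).le
          calc ∑ i, y₁ i * y₂ i = Real.sqrt ((∑ i, y₁ i * y₂ i)^2) := (Real.sqrt_sq hnn).symm
          _ ≤ Real.sqrt ((W1*W2)^2) := Real.sqrt_le_sqrt (by nlinarith [hcs, hW1sq, hW2sq])
          _ = W1*W2 := Real.sqrt_sq (by positivity)
        rw [← Finset.mul_sum] at h2
        nlinarith [mul_le_mul_of_nonneg_left h3 hτ.le]
      have hsplit2 : ∀ ε : Fin n → Bool,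
          ∑ i, ∑ j, CHW.pmr (ε i) * x i j * CHW.pmr (ε j)
            = (∑ i, x i i) + CHW.QD x ε := by
        intro ε
        unfold CHW.QD
        rw [← Finset.sum_add_distrib]
        refine Finset.sum_congr rfl fun i _ => ?_
        rw [← Finset.add_sum_erase _ (fun j => CHW.pmr (ε i) * x i j * CHW.pmr (ε j))
          (Finset.mem_univ i)]
        congr 1
        · rw [show CHW.pmr (ε i) * x i i * CHW.pmr (ε i)
            = x i i * (CHW.pmr (ε i) * CHW.pmr (ε i)) from by ring, CHW.pmr_sq, mul_one]
        · exact Finset.sum_congr rfl fun j _ => by ring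
      have hsubfilter : (Finset.univ.filter (fun ε : Fin n → Bool => t * W1 * W2
            < |∑ i, ∑ j, CHW.pmr (ε i) * x i j * CHW.pmr (ε j)|))
          ⊆ Finset.univ.filter (fun ε : Fin n → Bool =>
            (t - τ) * (W1 * W2) < |CHW.QD x ε|) := by
        intro ε hε
        have h := (Finset.mem_filter.mp hε).2
        refine Finset.mem_filter.mpr ⟨Finset.mem_univ _, ?_⟩
        rw [hsplit2 ε] at h
        have habs : |(∑ i, x i i) + CHW.QD x ε| ≤ |∑ i, x i i| + |CHW.QD x ε| := abs_add_le _ _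
        have : t * W1 * W2 = t * (W1 * W2) := by ring
        nlinarith
      -- Frobenius control
      have hFrob : ∑ i, ∑ j, (lam * ((x i j + x j i)/2))^2 ≤ 1/64 := by
        have hsq : ∀ i j, (lam * ((x i j + x j i)/2))^2
            ≤ lam^2 * (((x i j)^2 + (x j i)^2)/2) := by
          intro i j
          nlinarith [sq_nonneg (x i j - x j i), sq_nonneg lam]
        have h1 : ∑ i, ∑ j, (lam * ((x i j + x j i)/2))^2
            ≤ ∑ i, ∑ j, lam^2 * (((x i j)^2 + (x j i)^2)/2) :=
          Finset.sum_le_sum fun i _ => Finset.sum_le_sum fun j _ => hsq i j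
        have h2 : ∑ (i : Fin n), ∑ (j : Fin n), lam^2 * (((x i j)^2 + (x j i)^2)/2)
            = lam^2 * ∑ i, ∑ j, (x i j)^2 := by
          have htr : ∑ (i : Fin n), ∑ (j : Fin n), (x j i)^2 = ∑ i, ∑ j, (x i j)^2 :=
            Finset.sum_comm
          have e1 : ∑ (i : Fin n), ∑ (j : Fin n), lam^2 * (((x i j)^2 + (x j i)^2)/2)
              = (lam^2/2) * (∑ i, ∑ j, (x i j)^2) + (lam^2/2) * (∑ i, ∑ j, (x j i)^2) := by
            simp only [Finset.mul_sum, ← Finset.sum_add_distrib]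
            all_goals try exact
              Finset.sum_congr rfl fun i _ => Finset.sum_congr rfl fun j _ => by ring
          rw [e1, htr]; ring
        have hx2 : ∀ i j, (x i j)^2 ≤ τ^2 * (y₁ i^2 * y₂ j^2) := by
          intro i j
          nlinarith [sq_abs (x i j), abs_nonneg (x i j), hx i j,
            mul_nonneg (mul_nonneg hτ.le (hy₁ i).le) (hy₂ j).le]
        have h3' : ∑ i, ∑ j, (x i j)^2 ≤ τ^2 * (W1^2 * W2^2) := by
          have hb : ∑ i, ∑ j, (x i j)^2 ≤ ∑ i, ∑ j, τ^2 * (y₁ i^2 * y₂ j^2) :=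
            Finset.sum_le_sum fun i _ => Finset.sum_le_sum fun j _ => hx2 i j
          have he : τ^2 * ((∑ i, y₁ i^2) * (∑ j, y₂ j^2))
              = ∑ (i : Fin n), ∑ (j : Fin n), τ^2 * (y₁ i^2 * y₂ j^2) := by
            rw [Finset.sum_mul_sum]
            simp only [Finset.mul_sum]
          calc ∑ i, ∑ j, (x i j)^2 ≤ _ := hb
          _ = τ^2 * ((∑ i, y₁ i^2) * (∑ j, y₂ j^2)) := he.symm
          _ = τ^2 * (W1^2 * W2^2) := by rw [hW1sq, hW2sq]
        have hval : lam^2 * (τ^2 * (W1^2 * W2^2)) = 1/64 := by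
          rw [hlamdef]
          field_simp
          try ring
        calc ∑ i, ∑ j, (lam * ((x i j + x j i)/2))^2
            ≤ ∑ i, ∑ j, lam^2 * (((x i j)^2 + (x j i)^2)/2) := h1
        _ = lam^2 * ∑ i, ∑ j, (x i j)^2 := h2
        _ ≤ lam^2 * (τ^2 * (W1^2 * W2^2)) := mul_le_mul_of_nonneg_left h3' (sq_nonneg lam)
        _ = 1/64 := hval
      -- apply the cube tail bound
      have hcard := CHW.cube_tail x lam ((t - τ) * (W1 * W2)) hlam hFrob
      have hmono : ((Finset.univ.filter (fun ε : Fin n → Bool => t * W1 * W2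
              < |∑ i, ∑ j, CHW.pmr (ε i) * x i j * CHW.pmr (ε j)|)).card : ℝ)
          ≤ ((Finset.univ.filter (fun ε : Fin n → Bool =>
              (t - τ) * (W1 * W2) < |CHW.QD x ε|)).card : ℝ) := by
        exact_mod_cast Finset.card_le_card hsubfilter
      have hDreal : ((Finset.univ.filter (fun ε : Fin n → Bool => t * W1 * W2
              < |∑ i, ∑ j, CHW.pmr (ε i) * x i j * CHW.pmr (ε j)|)).card : ℝ)
          ≤ 2^n * D := by
        have h2n : (0:ℝ) ≤ (2:ℝ)^n := by positivity
        calc _ ≤ _ := hmono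
        _ ≤ 2^n * (2 * Real.exp (1/32)
            * Real.exp (-(lam * ((t - τ) * (W1 * W2))))) := hcard
        _ ≤ 2^n * D := mul_le_mul_of_nonneg_left hnum h2n
      have hENN : ((Finset.univ.filter (fun ε : Fin n → Bool => t * W1 * W2
              < |∑ i, ∑ j, CHW.pmr (ε i) * x i j * CHW.pmr (ε j)|)).card : ℝ≥0∞)
          ≤ 2^n * ENNReal.ofReal D := by
        rw [← ENNReal.ofReal_natCast]
        calc ENNReal.ofReal _ ≤ ENNReal.ofReal (2^n * D) := ENNReal.ofReal_le_ofReal hDreal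
        _ = ENNReal.ofReal (2^n) * ENNReal.ofReal D := ENNReal.ofReal_mul (by positivity)
        _ = 2^n * ENNReal.ofReal D := by
            rw [show ((2:ℝ)^n : ℝ) = ((2:ℝ))^n from rfl, ENNReal.ofReal_pow (by norm_num : (0:ℝ) ≤ 2)]
            norm_num
      calc ((Finset.univ.filter (fun ε : Fin n → Bool => t * W1 * W2
              < |∑ i, ∑ j, CHW.pmr (ε i) * x i j * CHW.pmr (ε j)|)).card : ℝ≥0∞) * (1/2)^n
          ≤ (2^n * ENNReal.ofReal D) * (1/2)^n := mul_le_mul_left hENN _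
      _ = ENNReal.ofReal D * ((2 * (1/2))^n) := by rw [mul_pow]; ring
      _ = ENNReal.ofReal D := by
            rw [show (2 : ℝ≥0∞) * (1/2) = 2 * 2⁻¹ from by norm_num,
              ENNReal.mul_inv_cancel (by norm_num) (by norm_num), one_pow, mul_one]
    · have hsec : Prod.mk x ⁻¹' S = ∅ := by
        ext e
        simp only [hSdef, Set.mem_preimage, Set.mem_setOf_eq, Set.mem_empty_iff_false, iff_false]
        tauto
      rw [hsec, measure_empty]
      exact zero_le'
  -- assemble everything
  have hEBadc : μ (E ∩ Badᶜ) ≤ ENNReal.ofReal D := by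
    rw [hpre, ← Measure.map_apply (hXmeas.prodMk hξmeas) hSmeas, hprod,
      Measure.prod_apply hSmeas]
    calc ∫⁻ x, (μ.map ξ) (Prod.mk x ⁻¹' S) ∂(μ.map X)
        ≤ ∫⁻ _, ENNReal.ofReal D ∂(μ.map X) := lintegral_mono fun x => hsection x
    _ = ENNReal.ofReal D := by simp
  have hfinal : μ E ≤ μ Bad + μ (E ∩ Badᶜ) := by
    calc μ E ≤ μ (Bad ∪ (E ∩ Badᶜ)) := measure_mono (fun ω hω => by
        by_cases hb : ω ∈ Bad
        · exact Or.inl hb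
        · exact Or.inr ⟨hω, hb⟩)
    _ ≤ μ Bad + μ (E ∩ Badᶜ) := measure_union_le _ _
  calc μ E ≤ μ Bad + μ (E ∩ Badᶜ) := hfinal
  _ ≤ ENNReal.ofReal ((n:ℝ)^2 * β) + ENNReal.ofReal D := add_le_add hμBad hEBadc
  _ = ENNReal.ofReal ((n:ℝ)^2 * β + D) := (ENNReal.ofReal_add (by positivity) hD0).symm

end
end
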